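/- Let $(\alpha_n)_{n\ge 1}$ be a sequence of positive real numbers with $\lim_{n\to\infty}\alpha_n = \infty$ and $\lim_{n\to\infty} \alpha_n n^{-1/2} = 0$. Then there exists $N_0 > 0$ such that for all integers $n > N_0$ and all $x \ge 0$, $e^{-nx}\,\cosh_n(nx) \ge \left(\frac{1}{2} - \frac{1}{\sqrt{4\pi}}\,\alpha_n^{-1} e^{-\alpha_n^2/4}\right)\,\mathbb{1}\big(x \le 2 - \alpha_n n^{-1/2}\big)$, where $\mathbb{1}(x\le s)$ equals $1$ if $x\le s$ and $0$ otherwise. -/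

import Mathlib

open Real

lemma cubic_aux (t : ℝ) (ht : 0 ≤ t) :
    1 - t ≤ Real.exp (-(t + t^2/2 + t^3/3)) := by
  have key : ∀ u : ℝ, 0 ≤ u → (1 - u) * Real.exp (u + u^2/2 + u^3/3) ≤ 1 := by
    have hder : ∀ u : ℝ, HasDerivAt (fun v => (1-v) * Real.exp (v + v^2/2 + v^3/3))
        (-(u^3) * Real.exp (u + u^2/2 + u^3/3)) u := by
      intro u
      have h1 : HasDerivAt (fun v : ℝ => v + v^2/2 + v^3/3) (1 + u + u^2) u := by
        have := ((hasDerivAt_id u).add ((hasDerivAt_pow 2 u).div_const 2)).add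
          ((hasDerivAt_pow 3 u).div_const 3)
        refine this.congr_deriv ?_
        norm_num
      have hexp := h1.exp
      have hf := ((hasDerivAt_const u (1:ℝ)).sub (hasDerivAt_id u)).mul hexp
      refine hf.congr_deriv ?_
      simp only [Pi.sub_apply, id_eq]
      ring
    have anti : AntitoneOn (fun v => (1-v) * Real.exp (v + v^2/2 + v^3/3)) (Set.Ici (0:ℝ)) := by
      apply antitoneOn_of_deriv_nonpos (convex_Ici 0)
      · exact (Continuous.mul (by continuity) (by continuity)).continuousOn
      · intro u hu
        exact (hder u).differentiableAt.differentiableWithinAt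
      · intro u hu
        rw [(hder u).deriv]
        have hu0 : 0 < u := by simpa using hu
        have := Real.exp_pos (u + u^2/2 + u^3/3)
        nlinarith [mul_pos (pow_pos hu0 3) this]
    intro u hu
    have := anti (Set.self_mem_Ici) (Set.mem_Ici.mpr hu) hu
    simpa using this
  have hk := key t ht
  have hp := Real.exp_pos (t + t^2/2 + t^3/3)
  rw [Real.exp_neg]
  calc 1 - t = (1-t) * Real.exp (t + t^2/2 + t^3/3) * (Real.exp (t + t^2/2 + t^3/3))⁻¹ := by
        field_simp
    _ ≤ 1 * (Real.exp (t + t^2/2 + t^3/3))⁻¹ := by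
        apply mul_le_mul_of_nonneg_right hk (by positivity)
    _ = (Real.exp (t + t^2/2 + t^3/3))⁻¹ := one_mul _

lemma mono_term {y Y : ℝ} {j : ℕ} (hy : 0 ≤ y) (hyY : y ≤ Y) (hYj : Y ≤ j) (hj : 1 ≤ j) :
    y ^ j * Real.exp (-y) ≤ Y ^ j * Real.exp (-Y) := by
  rcases eq_or_lt_of_le hy with h0 | h0
  · rw [← h0, zero_pow (by omega), zero_mul]
    have hY : 0 ≤ Y := le_trans hy hyY
    positivity
  · have hY : 0 < Y := lt_of_lt_of_le h0 hyY
    have hjpos : (0:ℝ) < j := lt_of_lt_of_le hY hYj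
    set s : ℝ := (Y - y) / j with hs
    have hs0 : 0 ≤ s := by
      apply div_nonneg (by linarith) (by positivity)
    have hs1 : s < 1 := by
      rw [hs, div_lt_one hjpos]
      linarith
    -- exp s ≤ 1/(1-s)
    have hexp : Real.exp s * (1 - s) ≤ 1 := by
      have := Real.add_one_le_exp (-s)
      have h1 : 1 - s ≤ Real.exp (-s) := by linarith
      calc Real.exp s * (1 - s) ≤ Real.exp s * Real.exp (-s) :=
            mul_le_mul_of_nonneg_left h1 (Real.exp_pos s).le
        _ = 1 := by rw [← Real.exp_add]; simp
    -- exp s * y ≤ Y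
    have hkey : Real.exp s * y ≤ Y := by
      have h2 : Y * (Y - y) / j ≤ Y - y := by
        rw [div_le_iff₀ hjpos]
        nlinarith
      have h3 : y ≤ Y * (1 - s) := by
        rw [hs]
        have : Y * ((Y - y)/j) = Y * (Y-y) / j := by ring
        nlinarith [h2]
      calc Real.exp s * y ≤ Real.exp s * (Y * (1 - s)) :=
            mul_le_mul_of_nonneg_left h3 (Real.exp_pos s).le
        _ = Y * (Real.exp s * (1 - s)) := by ring
        _ ≤ Y * 1 := mul_le_mul_of_nonneg_left hexp hY.le
        _ = Y := mul_one Y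
    -- raise to power j
    have hpow : (Real.exp s * y) ^ j ≤ Y ^ j := by
      apply pow_le_pow_left₀ (by positivity) hkey
    have hes : (Real.exp s) ^ j = Real.exp (Y - y) := by
      rw [← Real.exp_nat_mul, hs]
      congr 1
      field_simp
    rw [mul_pow, hes] at hpow
    have := mul_le_mul_of_nonneg_right hpow (Real.exp_pos (-Y)).le
    calc y ^ j * Real.exp (-y) = Real.exp (Y - y) * y ^ j * Real.exp (-Y) := by
          rw [show Real.exp (Y-y) * y^j * Real.exp (-Y) = y^j * (Real.exp (Y-y) * Real.exp (-Y)) by ring,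
            ← Real.exp_add]
          congr 2
          ring
      _ ≤ Y ^ j * Real.exp (-Y) := this

lemma stirling_lower (m : ℕ) (hm : 1 ≤ m) :
    Real.sqrt π * (Real.sqrt (2 * m) * ((m : ℝ) / Real.exp 1) ^ m) ≤ (Nat.factorial m : ℝ) := by
  have hanti := Stirling.stirlingSeq'_antitone
  have htend : Filter.Tendsto (Stirling.stirlingSeq ∘ Nat.succ) Filter.atTop (nhds (Real.sqrt π)) :=
    Stirling.tendsto_stirlingSeq_sqrt_pi.comp (Filter.tendsto_add_atTop_nat 1)
  obtain ⟨k, hk⟩ := Nat.exists_eq_add_of_le hm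
  have hle : Real.sqrt π ≤ Stirling.stirlingSeq m := by
    have := hanti.le_of_tendsto htend k
    simpa [hk, Function.comp, Nat.succ_eq_add_one, Nat.add_comm] using this
  rw [Stirling.stirlingSeq] at hle
  have hden : 0 < Real.sqrt (2 * m) * ((m : ℝ) / Real.exp 1) ^ m := by
    have hm0 : (0:ℝ) < m := by exact_mod_cast hm
    positivity
  rw [le_div_iff₀ hden] at hle
  exact hle

lemma even_exp_hasSum (y : ℝ) :
    HasSum (fun k : ℕ => y ^ (2*k) / (Nat.factorial (2*k) : ℝ))
      ((Real.exp y + Real.exp (-y)) / 2) := by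
  have hf : HasSum (fun k : ℕ => y ^ k / (Nat.factorial k : ℝ)) (Real.exp y) := by
    have := NormedSpace.expSeries_div_hasSum_exp y
    rwa [← Real.exp_eq_exp_ℝ] at this
  have hfneg : HasSum (fun k : ℕ => (-y) ^ k / (Nat.factorial k : ℝ)) (Real.exp (-y)) := by
    have := NormedSpace.expSeries_div_hasSum_exp (-y)
    rwa [← Real.exp_eq_exp_ℝ] at this
  have he : Summable (fun k : ℕ => y ^ (2*k) / (Nat.factorial (2*k) : ℝ)) :=
    hf.summable.comp_injective (fun a b h => by omega)
  have ho : Summable (fun k : ℕ => y ^ (2*k+1) / (Nat.factorial (2*k+1) : ℝ)) :=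
    hf.summable.comp_injective (fun a b h => by omega)
  set E := ∑' k : ℕ, y ^ (2*k) / (Nat.factorial (2*k) : ℝ) with hE
  set O := ∑' k : ℕ, y ^ (2*k+1) / (Nat.factorial (2*k+1) : ℝ) with hO
  have h1 : HasSum (fun k : ℕ => y ^ k / (Nat.factorial k : ℝ)) (E + O) :=
    HasSum.even_add_odd he.hasSum ho.hasSum
  have hey : Real.exp y = E + O := h1.unique hf ▸ (hf.unique h1)
  have heneg : HasSum (fun k : ℕ => (-y) ^ (2*k) / (Nat.factorial (2*k) : ℝ)) E := by
    have : (fun k : ℕ => (-y) ^ (2*k) / (Nat.factorial (2*k) : ℝ)) =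
        (fun k : ℕ => y ^ (2*k) / (Nat.factorial (2*k) : ℝ)) := by
      funext k
      rw [Even.neg_pow (even_two_mul k)]
    rw [this]
    exact he.hasSum
  have honeg : HasSum (fun k : ℕ => (-y) ^ (2*k+1) / (Nat.factorial (2*k+1) : ℝ)) (-O) := by
    have : (fun k : ℕ => (-y) ^ (2*k+1) / (Nat.factorial (2*k+1) : ℝ)) =
        (fun k : ℕ => -(y ^ (2*k+1) / (Nat.factorial (2*k+1) : ℝ))) := by
      funext k
      rw [Odd.neg_pow ⟨k, by ring⟩, neg_div]
    rw [this]
    exact ho.hasSum.neg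
  have h2 : HasSum (fun k : ℕ => (-y) ^ k / (Nat.factorial k : ℝ)) (E + -O) :=
    HasSum.even_add_odd heneg honeg
  have heyneg : Real.exp (-y) = E + -O := h2.unique hfneg ▸ (hfneg.unique h2)
  have : (Real.exp y + Real.exp (-y)) / 2 = E := by
    rw [hey, heyneg]; ring
  rw [this]
  exact he.hasSum

lemma tail_geom (Y : ℝ) (hY : 0 ≤ Y) (n : ℕ) :
    ∀ j : ℕ, Y ^ (2*(j+(n+1))) / (Nat.factorial (2*(j+(n+1))) : ℝ) ≤
      Y ^ (2*(n+1)) / (Nat.factorial (2*(n+1)) : ℝ) *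
        (Y^2 / ((2*(n:ℝ)+3) * (2*(n:ℝ)+4))) ^ j := by
  intro j
  induction j with
  | zero => simp
  | succ j ih =>
    have hk : 2*(j+1+(n+1)) = 2*(j+(n+1)) + 2 := by ring
    rw [hk]
    set k := 2*(j+(n+1)) with hkdef
    have hfac : (Nat.factorial (k+2) : ℝ) = (Nat.factorial k : ℝ) * (((k:ℝ)+1) * ((k:ℝ)+2)) := by
      rw [show k+2 = (k+1)+1 from rfl, Nat.factorial_succ, Nat.factorial_succ]
      push_cast
      ring
    have hfk : (0:ℝ) < (Nat.factorial k : ℝ) := by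
      exact_mod_cast Nat.factorial_pos k
    have hsplit : Y ^ (k+2) / (Nat.factorial (k+2) : ℝ)
        = (Y ^ k / (Nat.factorial k : ℝ)) * (Y^2 / (((k:ℝ)+1) * ((k:ℝ)+2))) := by
      rw [hfac, pow_add]
      field_simp
    rw [hsplit]
    have hcast : 2*((n:ℝ)+1) ≤ (k:ℝ) := by
      have h : 2*(n+1) ≤ k := by omega
      exact_mod_cast h
    have hk1 : (2*(n:ℝ)+3) ≤ (k:ℝ)+1 := by linarith
    have hk2 : (2*(n:ℝ)+4) ≤ (k:ℝ)+2 := by linarith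
    have hd0 : (0:ℝ) < (2*(n:ℝ)+3) * (2*(n:ℝ)+4) := by positivity
    have hratio : Y^2 / (((k:ℝ)+1) * ((k:ℝ)+2)) ≤ Y^2 / ((2*(n:ℝ)+3) * (2*(n:ℝ)+4)) := by
      apply div_le_div_of_nonneg_left (by positivity) hd0
      apply mul_le_mul hk1 hk2 (by positivity) (by positivity)
    calc Y ^ k / (Nat.factorial k : ℝ) * (Y^2 / (((k:ℝ)+1) * ((k:ℝ)+2)))
        ≤ (Y ^ (2*(n+1)) / (Nat.factorial (2*(n+1)) : ℝ) *
            (Y^2 / ((2*(n:ℝ)+3) * (2*(n:ℝ)+4))) ^ j) * (Y^2 / ((2*(n:ℝ)+3) * (2*(n:ℝ)+4))) := by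
          apply mul_le_mul ih hratio (by positivity)
          positivity
      _ = Y ^ (2*(n+1)) / (Nat.factorial (2*(n+1)) : ℝ) *
            (Y^2 / ((2*(n:ℝ)+3) * (2*(n:ℝ)+4))) ^ (j+1) := by
          rw [pow_succ]
          ring

lemma expo_aux (N A : ℝ) (hN : 11 ≤ N) (hA4 : 4 ≤ A) (hAN : 2*A ≤ N) :
    A^2/(4*N) + A/(N+1) ≤ (A+2)^2/(2*(2*N+2)) + (A+2)^3/(3*(2*N+2)^2) := by
  have hN0 : (0:ℝ) < N := by linarith
  have hN1 : (0:ℝ) < N + 1 := by linarith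
  have hA0 : (0:ℝ) ≤ A := by linarith
  have haux : 3*A^2*(N+1) ≤ N*(A+2)^3 := by
    nlinarith [mul_nonneg (mul_nonneg (sub_nonneg.2 hA4) (sq_nonneg A)) hN0.le,
      mul_nonneg (sq_nonneg A) (by linarith : (0:ℝ) ≤ 7*N-3), mul_nonneg hA0 hN0.le]
  have key : 3*A^2*(N+1)^2 + 12*A*N*(N+1) ≤ 3*N*(N+1)*(A+2)^2 + N*(A+2)^3 := by
    nlinarith [haux]
  rw [div_add_div _ _ (by positivity : (4:ℝ)*N ≠ 0) (by positivity : N+1 ≠ 0),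
    div_add_div _ _ (by positivity : 2*(2*N+2) ≠ 0) (by positivity : 3*(2*N+2)^2 ≠ 0),
    div_le_div_iff₀ (by positivity) (by positivity)]
  nlinarith [mul_le_mul_of_nonneg_right key (by positivity : (0:ℝ) ≤ 16*(N+1)^2)]

lemma poly_aux (N A : ℝ) (hN : 11 ≤ N) (hA4 : 4 ≤ A) (hAN : 2*A ≤ N) :
    A*(N+1)*((2*N+3)*(2*N+4)) ≤ N*((N+1+A)*((A+2)*(4*N+2-A))) := by
  have hA0 : (0:ℝ) ≤ A := by linarith
  have hN0 : (0:ℝ) ≤ N := by linarith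
  have p1 : (0:ℝ) ≤ N*N*A*(A-4) := by
    apply mul_nonneg (mul_nonneg (mul_nonneg hN0 hN0) hA0) (by linarith)
  have p2 : (0:ℝ) ≤ N*(A*A)*(N-2*A) := by
    apply mul_nonneg (mul_nonneg hN0 (mul_nonneg hA0 hA0)) (by linarith)
  have p3 : (0:ℝ) ≤ (A*A)*(N-11)*N := by
    apply mul_nonneg (mul_nonneg (mul_nonneg hA0 hA0) (by linarith)) hN0
  have p4 : (0:ℝ) ≤ N*A*(A-4) := by
    apply mul_nonneg (mul_nonneg hN0 hA0) (by linarith)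
  have p5 : (0:ℝ) ≤ A*(A-4) := mul_nonneg hA0 (by linarith)
  have p6 : (0:ℝ) ≤ (N-11)*(A-4) := mul_nonneg (by linarith) (by linarith)
  nlinarith [p1, p2, p3, p4, p5, p6]
set_option maxHeartbeats 2000000 in
lemma tail_bound (n : ℕ) (hn : 11 ≤ n) (a y : ℝ) (ha : 4 ≤ a)
    (hhalf : a ≤ Real.sqrt n / 2) (hy0 : 0 ≤ y)
    (hyle : y ≤ 2*(n:ℝ) - a * Real.sqrt n) :
    Real.exp (-y) * ∑' i : ℕ, y ^ (2*(i+(n+1))) / (Nat.factorial (2*(i+(n+1))) : ℝ)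
      ≤ 1 / Real.sqrt (4*π) * a⁻¹ * Real.exp (-a^2/4) := by
  have hN11 : (11:ℝ) ≤ (n:ℝ) := by exact_mod_cast hn
  set N : ℝ := (n:ℝ) with hNdef
  set s : ℝ := Real.sqrt N with hsdef
  have hs0 : 0 < s := Real.sqrt_pos.mpr (by linarith)
  have hss : s * s = N := Real.mul_self_sqrt (by linarith)
  have hs1 : 1 ≤ s := by nlinarith
  set A : ℝ := a * s with hAdef
  have hA4 : 4 ≤ A := by nlinarith
  have hAN : 2 * A ≤ N := by nlinarith
  set Y : ℝ := 2*N - A with hYdef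
  have hY0 : 0 ≤ Y := by rw [hYdef]; linarith
  have hyY : y ≤ Y := hyle
  set m : ℕ := 2*(n+1) with hmdef
  have hmr : ((m : ℕ) : ℝ) = 2*N+2 := by rw [hmdef]; push_cast; ring
  set r : ℝ := Y^2 / ((2*N+3) * (2*N+4)) with hrdef
  have hr0 : 0 ≤ r := by rw [hrdef]; positivity
  have hYlt : Y < 2*N+2 := by rw [hYdef]; linarith
  have hrlt : r < 1 := by
    rw [hrdef, div_lt_one (by nlinarith)]
    nlinarith
  set C : ℝ := Y^m / (Nat.factorial m : ℝ) * Real.exp (-Y) with hCdef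
  have hC0 : 0 ≤ C := by
    rw [hCdef]
    have : (0:ℝ) < (Nat.factorial m : ℝ) := by exact_mod_cast Nat.factorial_pos m
    positivity
  -- termwise bound
  have hterm : ∀ i : ℕ, Real.exp (-y) * (y ^ (2*(i+(n+1))) / (Nat.factorial (2*(i+(n+1))) : ℝ))
      ≤ C * r ^ i := by
    intro i
    have hj2 : Y ≤ ((2*(i+(n+1)) : ℕ) : ℝ) := by
      have hi0 : (0:ℝ) ≤ (i:ℝ) := Nat.cast_nonneg i
      push_cast
      rw [hYdef]
      linarith
    have hmono := mono_term hy0 hyY hj2 (by omega)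
    have hfp : (0:ℝ) < (Nat.factorial (2*(i+(n+1))) : ℝ) := by
      exact_mod_cast Nat.factorial_pos _
    have h1 : Real.exp (-y) * (y ^ (2*(i+(n+1))) / (Nat.factorial (2*(i+(n+1))) : ℝ))
        ≤ Real.exp (-Y) * (Y ^ (2*(i+(n+1))) / (Nat.factorial (2*(i+(n+1))) : ℝ)) := by
      calc Real.exp (-y) * (y ^ (2*(i+(n+1))) / (Nat.factorial (2*(i+(n+1))) : ℝ))
          = (y ^ (2*(i+(n+1))) * Real.exp (-y)) * ((Nat.factorial (2*(i+(n+1))) : ℝ))⁻¹ := by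
            rw [div_eq_mul_inv]; ring
        _ ≤ (Y ^ (2*(i+(n+1))) * Real.exp (-Y)) * ((Nat.factorial (2*(i+(n+1))) : ℝ))⁻¹ :=
            mul_le_mul_of_nonneg_right hmono (by positivity)
        _ = Real.exp (-Y) * (Y ^ (2*(i+(n+1))) / (Nat.factorial (2*(i+(n+1))) : ℝ)) := by
            rw [div_eq_mul_inv]; ring
    have h2 := tail_geom Y hY0 n i
    rw [← hNdef] at h2
    calc Real.exp (-y) * (y ^ (2*(i+(n+1))) / (Nat.factorial (2*(i+(n+1))) : ℝ))
        ≤ Real.exp (-Y) * (Y ^ (2*(i+(n+1))) / (Nat.factorial (2*(i+(n+1))) : ℝ)) := h1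
      _ ≤ Real.exp (-Y) * (Y ^ (2*(n+1)) / (Nat.factorial (2*(n+1)) : ℝ) *
            (Y^2 / ((2*N+3) * (2*N+4))) ^ i) :=
          mul_le_mul_of_nonneg_left h2 (Real.exp_pos (-Y)).le
      _ = C * r ^ i := by rw [hCdef, hrdef, hmdef]; ring
  -- summability
  have hgsum : Summable (fun k : ℕ => y ^ (2*k) / (Nat.factorial (2*k) : ℝ)) :=
    (even_exp_hasSum y).summable
  have hsl : Summable (fun i : ℕ =>
      Real.exp (-y) * (y ^ (2*(i+(n+1))) / (Nat.factorial (2*(i+(n+1))) : ℝ))) := by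
    apply Summable.mul_left
    exact (summable_nat_add_iff (f := fun k : ℕ => y ^ (2*k) / (Nat.factorial (2*k) : ℝ))
      (n+1)).mpr hgsum
  have hsr : Summable (fun i : ℕ => C * r ^ i) :=
    (summable_geometric_of_lt_one hr0 hrlt).mul_left C
  have hsum : Real.exp (-y) * (∑' i : ℕ, y ^ (2*(i+(n+1))) / (Nat.factorial (2*(i+(n+1))) : ℝ))
      ≤ C * (1-r)⁻¹ := by
    rw [← tsum_mul_left]
    calc (∑' i : ℕ, Real.exp (-y) * (y ^ (2*(i+(n+1))) / (Nat.factorial (2*(i+(n+1))) : ℝ)))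
        ≤ ∑' i : ℕ, C * r ^ i := Summable.tsum_le_tsum hterm hsl hsr
      _ = C * ∑' i : ℕ, r ^ i := tsum_mul_left
      _ = C * (1-r)⁻¹ := by rw [tsum_geometric_of_lt_one hr0 hrlt]
  -- Stirling bound on C
  set d : ℝ := A + 2 with hddef
  have hd0 : (0:ℝ) < d := by rw [hddef]; linarith
  have hdY : 2*N+2 - Y = d := by rw [hYdef, hddef]; ring
  have hMr0 : (0:ℝ) < 2*N+2 := by linarith
  have hstir := stirling_lower m (by omega)
  have hsm : Real.sqrt (2*(m:ℝ)) = 2 * Real.sqrt (N+1) := by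
    rw [hmr, show 2*(2*N+2) = 2^2*(N+1) by ring, Real.sqrt_mul (by positivity), Real.sqrt_sq
      (by norm_num)]
  have hfacpos : (0:ℝ) < (Nat.factorial m : ℝ) := by exact_mod_cast Nat.factorial_pos m
  have hden0 : (0:ℝ) < Real.sqrt π * (Real.sqrt (2*(m:ℝ)) * (((m:ℕ):ℝ)/Real.exp 1)^m) := by
    have h1 : (0:ℝ) < Real.sqrt π := Real.sqrt_pos.mpr Real.pi_pos
    have h2 : (0:ℝ) < ((m:ℕ):ℝ) := by rw [hmr]; linarith
    have h3 : (0:ℝ) < Real.sqrt (2*(m:ℝ)) := Real.sqrt_pos.mpr (by linarith)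
    positivity
  have hCb1 : C ≤ Y^m * Real.exp (-Y) /
      (Real.sqrt π * (Real.sqrt (2*(m:ℝ)) * (((m:ℕ):ℝ)/Real.exp 1)^m)) := by
    have hCeq : C = Y^m * Real.exp (-Y) / (Nat.factorial m : ℝ) := by rw [hCdef]; ring
    rw [hCeq]
    apply div_le_div_of_nonneg_left (by positivity) hden0 hstir
  -- the exponential-side bound
  have hYoverM : Y^m / (((m:ℕ):ℝ)/Real.exp 1)^m * Real.exp (-Y)
      ≤ Real.exp (-(a^2/4 + A/(N+1))) := by
    have hexp1 : (0:ℝ) < Real.exp 1 := Real.exp_pos 1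
    have h1 : Y^m / (((m:ℕ):ℝ)/Real.exp 1)^m = Real.exp (2*N+2) * (Y/(2*N+2))^m := by
      rw [hmr, ← div_pow, show Y / ((2*N+2)/Real.exp 1) = Real.exp 1 * (Y/(2*N+2)) by
        field_simp, mul_pow, Real.exp_one_pow, hmr]
    set t : ℝ := d/(2*N+2) with htdef
    have ht0 : 0 ≤ t := by rw [htdef]; positivity
    have hYt : Y/(2*N+2) = 1 - t := by
      rw [htdef]
      field_simp
      linarith [hdY]
    have h2 : (Y/(2*N+2))^m ≤ Real.exp (-(d + d^2/(2*(2*N+2)) + d^3/(3*(2*N+2)^2))) := by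
      rw [hYt]
      have hcb := cubic_aux t ht0
      calc (1-t)^m ≤ (Real.exp (-(t + t^2/2 + t^3/3)))^m := by
            apply pow_le_pow_left₀ (by rw [← hYt]; positivity) hcb
        _ = Real.exp ((m:ℕ) * -(t + t^2/2 + t^3/3)) := by rw [← Real.exp_nat_mul]
        _ = Real.exp (-(d + d^2/(2*(2*N+2)) + d^3/(3*(2*N+2)^2))) := by
            congr 1
            rw [hmr, htdef]
            field_simp
    have h3 : Real.exp (2*N+2) * (Y/(2*N+2))^m * Real.exp (-Y)
        ≤ Real.exp (-(d^2/(2*(2*N+2)) + d^3/(3*(2*N+2)^2))) := by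
      calc Real.exp (2*N+2) * (Y/(2*N+2))^m * Real.exp (-Y)
          ≤ Real.exp (2*N+2) * Real.exp (-(d + d^2/(2*(2*N+2)) + d^3/(3*(2*N+2)^2)))
            * Real.exp (-Y) := by
            apply mul_le_mul_of_nonneg_right (mul_le_mul_of_nonneg_left h2 (Real.exp_pos _).le)
              (Real.exp_pos _).le
        _ = Real.exp ((2*N+2) + -(d + d^2/(2*(2*N+2)) + d^3/(3*(2*N+2)^2)) + -Y) := by
            rw [← Real.exp_add, ← Real.exp_add]
        _ = Real.exp (-(d^2/(2*(2*N+2)) + d^3/(3*(2*N+2)^2))) := by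
            congr 1
            linarith [hdY]
    have hexpo : a^2/4 + A/(N+1) ≤ d^2/(2*(2*N+2)) + d^3/(3*(2*N+2)^2) := by
      have ha2 : a^2 * N = A^2 := by
        rw [hAdef]
        calc a^2 * N = a^2 * (s*s) := by rw [hss]
          _ = (a*s)^2 := by ring
      have h4 : a^2/4 = A^2/(4*N) := by
        rw [eq_div_iff (by positivity : (4:ℝ)*N ≠ 0)]
        linarith [ha2]
      rw [h4, hddef]
      exact expo_aux N A hN11 hA4 hAN
    rw [h1]
    refine h3.trans (Real.exp_le_exp.mpr (by linarith [hexpo]))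
  have hC2 : C ≤ Real.exp (-(a^2/4 + A/(N+1))) / (Real.sqrt π * (2*Real.sqrt (N+1))) := by
    have hP0 : (0:ℝ) < (((m:ℕ):ℝ)/Real.exp 1)^m := by
      have h2 : (0:ℝ) < ((m:ℕ):ℝ) := by rw [hmr]; linarith
      exact pow_pos (div_pos h2 (Real.exp_pos 1)) m
    have hsp : (0:ℝ) < Real.sqrt π := Real.sqrt_pos.mpr Real.pi_pos
    have hs2m : (0:ℝ) < Real.sqrt (2*(m:ℝ)) := by
      rw [hsm]; positivity
    calc C ≤ Y^m * Real.exp (-Y) /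
          (Real.sqrt π * (Real.sqrt (2*(m:ℝ)) * (((m:ℕ):ℝ)/Real.exp 1)^m)) := hCb1
      _ = (Y^m / (((m:ℕ):ℝ)/Real.exp 1)^m * Real.exp (-Y)) /
          (Real.sqrt π * Real.sqrt (2*(m:ℝ))) := by
          field_simp
      _ ≤ Real.exp (-(a^2/4 + A/(N+1))) / (Real.sqrt π * Real.sqrt (2*(m:ℝ))) := by
          apply div_le_div_of_nonneg_right hYoverM (by positivity)
      _ = Real.exp (-(a^2/4 + A/(N+1))) / (Real.sqrt π * (2*Real.sqrt (N+1))) := by rw [hsm]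
  -- inverse geometric factor bound
  have hMY0 : (0:ℝ) < 4*N+2-A := by linarith
  have hQ0 : (0:ℝ) < (2*N+3)*(2*N+4) := by nlinarith
  have hinv : (1-r)⁻¹ ≤ (2*N+3)*(2*N+4) / (d*(4*N+2-A)) := by
    have hsmall : (0:ℝ) < d*(4*N+2-A)/((2*N+3)*(2*N+4)) := by
      apply div_pos (mul_pos hd0 hMY0) hQ0
    have hle : d*(4*N+2-A)/((2*N+3)*(2*N+4)) ≤ 1 - r := by
      rw [hrdef, show (1:ℝ) - Y^2/((2*N+3)*(2*N+4))
          = (((2*N+3)*(2*N+4)) - Y^2)/((2*N+3)*(2*N+4)) by field_simp]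
      apply div_le_div_of_nonneg_right _ hQ0.le
      rw [hddef, hYdef]
      nlinarith
    calc (1-r)⁻¹ ≤ (d*(4*N+2-A)/((2*N+3)*(2*N+4)))⁻¹ := by
          apply inv_anti₀ hsmall hle
      _ = (2*N+3)*(2*N+4) / (d*(4*N+2-A)) := by rw [inv_div]
  have h1r0 : (0:ℝ) < 1 - r := by linarith
  -- exp(-A/(N+1)) bound
  have hN1 : (0:ℝ) < N + 1 := by linarith
  have hNA0 : (0:ℝ) < N + 1 + A := by linarith
  have hexpA : Real.exp (-(A/(N+1))) ≤ (N+1)/(N+1+A) := by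
    rw [Real.exp_neg]
    have h1 : (N+1+A)/(N+1) ≤ Real.exp (A/(N+1)) := by
      have h2 := Real.add_one_le_exp (A/(N+1))
      have heq : (N+1+A)/(N+1) = A/(N+1) + 1 := by field_simp; ring
      rw [heq]
      exact h2
    calc (Real.exp (A/(N+1)))⁻¹ ≤ ((N+1+A)/(N+1))⁻¹ := by
          apply inv_anti₀ (by positivity) h1
      _ = (N+1)/(N+1+A) := by rw [inv_div]
  -- key arithmetic inequality
  have ha0 : (0:ℝ) < a := by linarith
  have hRnn : (0:ℝ) ≤ (N+1+A)*((A+2)*(4*N+2-A)) :=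
    mul_nonneg hNA0.le (mul_nonneg (by linarith : (0:ℝ) ≤ A+2) hMY0.le)
  have hKEY : Real.exp (-(A/(N+1))) * ((2*N+3)*(2*N+4)) * a
      ≤ Real.sqrt (N+1) * (d*(4*N+2-A)) := by
    have hsle : s ≤ Real.sqrt (N+1) := by
      rw [hsdef]
      exact Real.sqrt_le_sqrt (by linarith)
    have hP := poly_aux N A hN11 hA4 hAN
    have h2 : Real.exp (-(A/(N+1))) * ((2*N+3)*(2*N+4)) * a
        ≤ (N+1)/(N+1+A) * ((2*N+3)*(2*N+4)) * a := by
      apply mul_le_mul_of_nonneg_right (mul_le_mul_of_nonneg_right hexpA hQ0.le) ha0.le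
    refine h2.trans ?_
    rw [div_mul_eq_mul_div, div_mul_eq_mul_div, div_le_iff₀ hNA0]
    apply le_of_mul_le_mul_right _ hs0
    calc (N+1) * ((2*N+3)*(2*N+4)) * a * s
        = (a*s) * ((N+1) * ((2*N+3)*(2*N+4))) := by ring
      _ = A * ((N+1) * ((2*N+3)*(2*N+4))) := by rw [hAdef]
      _ = A*(N+1)*((2*N+3)*(2*N+4)) := by ring
      _ ≤ N*((N+1+A)*((A+2)*(4*N+2-A))) := hP
      _ = (s*s)*((N+1+A)*((A+2)*(4*N+2-A))) := by rw [hss]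
      _ ≤ (Real.sqrt (N+1)*s)*((N+1+A)*((A+2)*(4*N+2-A))) :=
          mul_le_mul_of_nonneg_right (mul_le_mul_of_nonneg_right hsle hs0.le) hRnn
      _ = Real.sqrt (N+1) * (d*(4*N+2-A)) * (N+1+A) * s := by rw [hddef]; ring
  -- final assembly
  have hsp : (0:ℝ) < Real.sqrt π := Real.sqrt_pos.mpr Real.pi_pos
  have hsn1 : (0:ℝ) < Real.sqrt (N+1) := Real.sqrt_pos.mpr hN1
  have hfinal : C * (1-r)⁻¹ ≤ 1 / Real.sqrt (4*π) * a⁻¹ * Real.exp (-a^2/4) := by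
    have step1 : C * (1-r)⁻¹ ≤ (Real.exp (-(a^2/4 + A/(N+1))) /
        (Real.sqrt π * (2*Real.sqrt (N+1)))) * ((2*N+3)*(2*N+4) / (d*(4*N+2-A))) := by
      apply mul_le_mul hC2 hinv (by positivity) (by positivity)
    refine step1.trans ?_
    have hpi4 : Real.sqrt (4*π) = 2*Real.sqrt π := by
      rw [show (4:ℝ)*π = 2^2*π by norm_num, Real.sqrt_mul (by norm_num : (0:ℝ) ≤ 2^2),
        Real.sqrt_sq (by norm_num : (0:ℝ) ≤ 2)]
    have hsplit : Real.exp (-(a^2/4 + A/(N+1)))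
        = Real.exp (-(a^2/4)) * Real.exp (-(A/(N+1))) := by
      rw [← Real.exp_add]
      congr 1
      ring
    have hrhs : 1/Real.sqrt (4*π) * a⁻¹ * Real.exp (-a^2/4)
        = Real.exp (-(a^2/4)) / (2*Real.sqrt π*a) := by
      rw [hpi4, neg_div]
      field_simp
    rw [hrhs, hsplit, div_mul_div_comm,
      div_le_div_iff₀ (by positivity) (by positivity : (0:ℝ) < 2*Real.sqrt π*a)]
    have hmul := mul_le_mul_of_nonneg_left hKEY
      (by positivity : (0:ℝ) ≤ 2*Real.sqrt π * Real.exp (-(a^2/4)))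
    refine le_trans (le_of_eq ?_) (le_trans hmul (le_of_eq ?_)) <;> ring
  exact hsum.trans hfinal

/-- `cosh_n(x) = ∑_{k=0}^{n} x^(2k)/(2k)!`, the degree-`2n` Taylor polynomial of `cosh`. -/
noncomputable def coshPoly (n : ℕ) (x : ℝ) : ℝ :=
  ∑ k ∈ Finset.range (n + 1), x ^ (2 * k) / (Nat.factorial (2 * k) : ℝ)

theorem stmt8 (α : ℕ → ℝ) (hpos : ∀ n : ℕ, 1 ≤ n → 0 < α n)
    (hdiv : Filter.Tendsto α Filter.atTop Filter.atTop)
    (hslow : Filter.Tendsto (fun n : ℕ => α n * (n : ℝ) ^ (-(1 / 2) : ℝ))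
      Filter.atTop (nhds 0)) :
    ∃ N₀ : ℕ, 0 < N₀ ∧ ∀ n : ℕ, N₀ < n → ∀ x : ℝ, 0 ≤ x →
      Real.exp (-(n * x)) * coshPoly n (n * x) ≥
        (1 / 2 - (1 / Real.sqrt (4 * Real.pi)) * (α n)⁻¹ * Real.exp (-(α n) ^ 2 / 4)) *
          (if x ≤ 2 - α n * (n : ℝ) ^ (-(1 / 2) : ℝ) then (1 : ℝ) else 0) := by
  have h1 : ∀ᶠ n : ℕ in Filter.atTop, 4 ≤ α n := hdiv.eventually_ge_atTop 4
  have h2 : ∀ᶠ n : ℕ in Filter.atTop, α n * (n : ℝ) ^ (-(1 / 2) : ℝ) < 1/2 :=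
    hslow.eventually (gt_mem_nhds (by norm_num))
  obtain ⟨N₁, hN₁⟩ := Filter.eventually_atTop.mp (h1.and h2)
  refine ⟨max N₁ 11, lt_of_lt_of_le (by norm_num) (le_max_right N₁ 11), ?_⟩
  intro n hn x hx
  have hn11 : 11 ≤ n := le_trans (le_max_right N₁ 11) hn.le
  have hnN₁ : N₁ ≤ n := le_trans (le_max_left N₁ 11) hn.le
  obtain ⟨ha4, hhalf⟩ := hN₁ n hnN₁
  have hn0 : (0:ℝ) < (n:ℝ) := by
    have : (0:ℕ) < n := by omega
    exact_mod_cast this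
  have hs0 : 0 < Real.sqrt n := Real.sqrt_pos.mpr hn0
  have hss : Real.sqrt n * Real.sqrt n = (n:ℝ) := Real.mul_self_sqrt (Nat.cast_nonneg n)
  have hrpow : (n:ℝ) ^ (-(1 / 2) : ℝ) = (Real.sqrt n)⁻¹ := by
    rw [Real.rpow_neg (Nat.cast_nonneg n)]
    congr 1
    rw [Real.sqrt_eq_rpow]
  by_cases hxle : x ≤ 2 - α n * (n : ℝ) ^ (-(1 / 2) : ℝ)
  · rw [if_pos hxle, mul_one]
    set a := α n with hadef
    set y := (n:ℝ) * x with hydef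
    have hy0 : 0 ≤ y := by positivity
    have hx2 : y ≤ 2*(n:ℝ) - a * Real.sqrt n := by
      have hx3 : x ≤ 2 - a * (Real.sqrt n)⁻¹ := by rwa [hrpow] at hxle
      have h3 := mul_le_mul_of_nonneg_left hx3 hn0.le
      calc y ≤ (n:ℝ)*(2 - a * (Real.sqrt n)⁻¹) := h3
        _ = 2*(n:ℝ) - a * ((n:ℝ) * (Real.sqrt n)⁻¹) := by ring
        _ = 2*(n:ℝ) - a * Real.sqrt n := by
            rw [show (n:ℝ) * (Real.sqrt n)⁻¹ = Real.sqrt n by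
              rw [← hss]; field_simp; rw [Real.sqrt_sq hs0.le]]
    have hhalf' : a ≤ Real.sqrt n / 2 := by
      have h4 : a * (Real.sqrt n)⁻¹ < 1/2 := by rwa [hrpow] at hhalf
      have h5 := mul_le_mul_of_nonneg_right h4.le hs0.le
      rw [inv_mul_cancel_right₀ (ne_of_gt hs0)] at h5
      linarith
    have hT := tail_bound n hn11 a y ha4 hhalf' hy0 hx2
    have hsplit := Summable.sum_add_tsum_nat_add (n+1) (even_exp_hasSum y).summable
    have htot : (∑' k : ℕ, y ^ (2*k) / (Nat.factorial (2*k) : ℝ))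
        = (Real.exp y + Real.exp (-y))/2 := (even_exp_hasSum y).tsum_eq
    have hpoly : coshPoly n y = (Real.exp y + Real.exp (-y))/2
        - ∑' i : ℕ, y ^ (2*(i+(n+1))) / (Nat.factorial (2*(i+(n+1))) : ℝ) := by
      rw [coshPoly, ← htot]
      linarith [hsplit]
    have hone : Real.exp (-y) * Real.exp y = 1 := by
      rw [← Real.exp_add]; simp
    have h5 : (1:ℝ)/2 ≤ Real.exp (-y) * ((Real.exp y + Real.exp (-y))/2) := by
      nlinarith [hone, mul_pos (Real.exp_pos (-y)) (Real.exp_pos (-y))]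
    rw [ge_iff_le, hpoly, mul_sub]
    linarith [hT, h5]
  · rw [if_neg hxle, mul_zero]
    have hc : 0 ≤ coshPoly n ((n:ℝ)*x) := by
      apply Finset.sum_nonneg
      intro k _
      have : (0:ℝ) < (Nat.factorial (2*k) : ℝ) := by exact_mod_cast Nat.factorial_pos (2*k)
      positivity
    exact mul_nonneg (Real.exp_pos _).le hc
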